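/- Let X be a topological space and x ∈ X a point having a countable i-network (N_i)_{i∈ω} (each N_i is an infinite subset of X, and every open neighborhood of x contains some N_i). Let ξ : ω → ω be a finite-to-one surjection with lim_n |ξ⁻¹(n)| = ∞. Then there exists an injective sequence (x_k)_{k∈ω} in X and a filter F on ω with ξ(F) = Fr such that (x_k) F-converges to x. -/

import Mathlib

open Set Filter Topology

private lemma exists_inj_seq {X : Type*} (N : ℕ → Set X) (hN : ∀ i, (N i).Infinite)
    (j : ℕ → ℕ) : ∃ y : ℕ → X, Function.Injective y ∧ ∀ k, y k ∈ N (j k) := by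
  classical
  choose f hf using fun (k : ℕ) (s : Finset X) =>
    ((hN (j k)).diff s.finite_toSet).nonempty
  let L : ℕ → Finset X := fun k => Nat.rec ∅ (fun m Lm => insert (f m Lm) Lm) k
  have hLsucc : ∀ k, L (k + 1) = insert (f k (L k)) (L k) := fun _ => rfl
  have hmono : ∀ a b, a ≤ b → L a ⊆ L b := by
    intro a b hab
    induction b, hab using Nat.le_induction with
    | base => exact subset_rfl
    | succ m hm ih => exact ih.trans (by rw [hLsucc]; exact Finset.subset_insert _ _)
  refine ⟨fun k => f k (L k), ?_, fun k => (hf k (L k)).1⟩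
  have hnot : ∀ k, f k (L k) ∉ L k := fun k h => (hf k (L k)).2 (Finset.mem_coe.mpr h)
  have hmem : ∀ k, f k (L k) ∈ L (k + 1) := by
    intro k; rw [hLsucc]; exact Finset.mem_insert_self _ _
  intro a b hab
  simp only at hab
  by_contra hne
  rcases Nat.lt_or_ge a b with h | h
  · exact hnot b (hab ▸ hmono (a + 1) b h (hmem a))
  · have h' : b < a := lt_of_le_of_ne h (Ne.symm hne)
    exact hnot a (hab ▸ hmono (b + 1) a h' (hmem b))

/-- if `x` has a countable i-network `(N i)` and `ξ` is a finite-to-one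
surjection with `|ξ⁻¹(n)| → ∞`, then there is an injective sequence in `X` that
`F`-converges to `x` for some filter `F` with `ξ(F) = Fr` (a `ξ`-meager filter). -/
theorem stmt6 {X : Type*} [TopologicalSpace X] (x : X) (N : ℕ → Set X)
    (hNinf : ∀ i, (N i).Infinite)
    (hNnet : ∀ U : Set X, IsOpen U → x ∈ U → ∃ i, N i ⊆ U)
    (ξ : ℕ → ℕ) (hfin : ∀ n, (ξ ⁻¹' {n}).Finite) (hsurj : Function.Surjective ξ)
    (hlim : Filter.Tendsto (fun n => (ξ ⁻¹' {n}).ncard) Filter.atTop Filter.atTop) :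
    ∃ (y : ℕ → X) (F : Filter ℕ), Function.Injective y ∧
      Filter.map ξ F = Filter.cofinite ∧ Filter.Tendsto y F (𝓝 x) := by
  classical
  set j : ℕ → ℕ := fun k => Nat.count (fun m => ξ m = ξ k) k with hj
  obtain ⟨y, hyinj, hymem⟩ := exists_inj_seq N hNinf j
  refine ⟨y, Filter.comap ξ Filter.cofinite ⊓ Filter.comap y (𝓝 x), hyinj, ?_, ?_⟩
  · apply le_antisymm
    · calc Filter.map ξ (Filter.comap ξ Filter.cofinite ⊓ Filter.comap y (𝓝 x))
          ≤ Filter.map ξ (Filter.comap ξ Filter.cofinite) := Filter.map_mono inf_le_left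
        _ ≤ Filter.cofinite := Filter.map_comap_le
    · intro B hB
      rw [Filter.mem_map, Filter.mem_inf_iff] at hB
      obtain ⟨s, hs, t, ht, hst⟩ := hB
      obtain ⟨C, hC, hCs⟩ := Filter.mem_comap.mp hs
      obtain ⟨U, hU, hUt⟩ := Filter.mem_comap.mp ht
      obtain ⟨V, hVU, hVopen, hxV⟩ := mem_nhds_iff.mp hU
      obtain ⟨i, hNi⟩ := hNnet V hVopen hxV
      -- good n's are in B
      have key : ∀ n, n ∈ C → i < (ξ ⁻¹' {n}).ncard → n ∈ B := by
        intro n hnC hi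
        set p : ℕ → Prop := fun m => ξ m = n with hp
        have hpset : setOf p = ξ ⁻¹' {n} := by ext m; simp [hp]; exact Iff.rfl
        have hcard : ∀ hf : (setOf p).Finite, i < hf.toFinset.card := by
          intro hf
          rw [← Set.ncard_eq_toFinset_card _ hf, hpset]
          exact hi
        set k := Nat.nth p i with hk
        have hk1 : ξ k = n := Nat.nth_mem i hcard
        have hk2 : Nat.count p k = i := Nat.count_nth hcard
        have hjk : j k = i := by
          simp only [hj, hk1]
          exact hk2
        have hks : k ∈ s := hCs (by simp [Set.mem_preimage, hk1, hnC])
        have hkt : k ∈ t := hUt (by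
          have : y k ∈ N i := hjk ▸ hymem k
          exact Set.mem_preimage.mpr (hVU (hNi this)))
        have : k ∈ ξ ⁻¹' B := hst ▸ ⟨hks, hkt⟩
        rwa [Set.mem_preimage, hk1] at this
      have hfin2 : {n | ¬ i < (ξ ⁻¹' {n}).ncard}.Finite := by
        have := hlim.eventually (Filter.eventually_gt_atTop i)
        rw [← Nat.cofinite_eq_atTop] at this
        exact this
      have : Bᶜ ⊆ Cᶜ ∪ {n | ¬ i < (ξ ⁻¹' {n}).ncard} := by
        intro n hn
        by_contra h
        push_neg at h
        rw [Set.mem_union] at h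
        push_neg at h
        obtain ⟨h1, h2⟩ := h
        exact hn (key n (not_not.mp h1) (not_not.mp (by simpa using h2)))
      exact (hC.union hfin2).subset this
  · exact Filter.tendsto_iff_comap.mpr inf_le_right
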